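/- Let X be a topological space, Y a compact topological space, D ⊆ X and f : D → Y. Then the cluster multifunction f̄, restricted to closure(D), is an upper continuous multifunction whose value f̄(x) is a nonempty compact subset of Y for every x ∈ closure(D). -/

import Mathlib

open Set

/-- The cluster set of a function `f : D → Z` (for `D ⊆ X`) at a point `x ∈ X`:
the intersection over all neighborhoods `U` of `x` of the closures of `f (U ∩ D)`. -/
def clusterSet {X Z : Type*} [TopologicalSpace X] [TopologicalSpace Z] {D : Set X}
    (f : D → Z) (x : X) : Set Z :=
  ⋂ U ∈ nhds x, closure (f '' {d : D | (d : X) ∈ U})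

/-- Let `X` be a topological space, `Y` a compact topological space,
`D ⊆ X` and `f : D → Y`. Then the cluster multifunction of `f`, restricted to
`closure D`, is an upper continuous multifunction whose value at each `x ∈ closure D`
is a nonempty compact subset of `Y`. -/
theorem clusterSet_upper_continuous_compact_valued {X Y : Type*} [TopologicalSpace X]
    [TopologicalSpace Y] [CompactSpace Y] (D : Set X) (f : D → Y) :
    (∀ x ∈ closure D, (clusterSet f x).Nonempty ∧ IsCompact (clusterSet f x)) ∧
    (∀ x ∈ closure D, ∀ V : Set Y, IsOpen V → clusterSet f x ⊆ V →
      ∃ U ∈ nhds x, ∀ u ∈ U ∩ closure D, clusterSet f u ⊆ V) := by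
  have key : ∀ x ∈ closure D, ∀ U ∈ nhds x,
      (closure (f '' {d : D | (d : X) ∈ U})).Nonempty := by
    intro x hx U hU
    obtain ⟨y, hyU, hyD⟩ := mem_closure_iff_nhds.mp hx U hU
    exact ⟨f ⟨y, hyD⟩, subset_closure ⟨⟨y, hyD⟩, hyU, rfl⟩⟩
  constructor
  · intro x hx
    have hclosed : IsClosed (clusterSet f x) :=
      isClosed_biInter fun U hU => isClosed_closure
    refine ⟨?_, hclosed.isCompact⟩
    have : Nonempty {U // U ∈ nhds x} := ⟨⟨univ, Filter.univ_mem⟩⟩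
    have h := IsCompact.nonempty_iInter_of_directed_nonempty_isCompact_isClosed
      (fun U : {U // U ∈ nhds x} => closure (f '' {d : D | (d : X) ∈ U.1}))
      (fun U V => ⟨⟨U.1 ∩ V.1, Filter.inter_mem U.2 V.2⟩,
        closure_mono (image_mono fun d hd => hd.1),
        closure_mono (image_mono fun d hd => hd.2)⟩)
      (fun U => key x hx U.1 U.2)
      (fun U => isClosed_closure.isCompact)
      (fun U => isClosed_closure)
    obtain ⟨y, hy⟩ := h
    refine ⟨y, ?_⟩
    simp only [clusterSet, mem_iInter]
    exact fun U hU => mem_iInter.mp hy ⟨U, hU⟩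
  · intro x hx V hV hsub
    by_contra hcon
    push_neg at hcon
    have : Nonempty {U // U ∈ nhds x} := ⟨⟨univ, Filter.univ_mem⟩⟩
    have h := IsCompact.nonempty_iInter_of_directed_nonempty_isCompact_isClosed
      (fun U : {U // U ∈ nhds x} => closure (f '' {d : D | (d : X) ∈ U.1}) \ V)
      (fun U W => ⟨⟨U.1 ∩ W.1, Filter.inter_mem U.2 W.2⟩,
        diff_subset_diff_left (closure_mono (image_mono fun d hd => hd.1)),
        diff_subset_diff_left (closure_mono (image_mono fun d hd => hd.2))⟩)
      ?_ (fun U => (isClosed_closure.inter hV.isClosed_compl).isCompact)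
      (fun U => isClosed_closure.inter hV.isClosed_compl)
    · obtain ⟨y, hy⟩ := h
      have hy' : y ∈ clusterSet f x := by
        simp only [clusterSet, mem_iInter]
        exact fun U hU => (mem_iInter.mp hy ⟨U, hU⟩).1
      exact (mem_iInter.mp hy ⟨univ, Filter.univ_mem⟩).2 (hsub hy')
    · -- every piece nonempty: otherwise closure ⊆ V for some U, contradicting hcon
      intro U
      rw [diff_nonempty]
      intro hUV
      obtain ⟨W, hWU, hWopen, hxW⟩ := mem_nhds_iff.mp U.2
      obtain ⟨u, hu, hviol⟩ := hcon W (hWopen.mem_nhds hxW)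
      have hsub2 : clusterSet f u ⊆ closure (f '' {d : D | (d : X) ∈ W}) := by
        intro y hy
        simp only [clusterSet, mem_iInter] at hy
        exact hy W (hWopen.mem_nhds hu.1)
      exact hviol (hsub2.trans ((closure_mono (image_mono (f := f) fun d hd => hWU hd)).trans hUV))
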